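/- arXiv:2209.14648 — 2 statements merged into one kernel-verified Lean document; each statement's English description precedes it below -/
import Mathlib

section
/- Let G be a profinite group and {G_t | t ∈ T} a collection of closed subgroups indexed by a profinite space T. Then the family is continuous (i.e., for every open subgroup U of G the set {t ∈ T | G_t ≤ U} is open in T) if and only if the set {(g,t) ∈ G × T | g ∈ G_t} is closed in G × T. -/
open Pointwise in
lemma exists_openSubgroup_of_not_mem {G : Type*} [Group G] [TopologicalSpace G]
    [IsTopologicalGroup G] [CompactSpace G] [T2Space G] [TotallyDisconnectedSpace G]
    {H : Subgroup G} (hH : IsClosed (H : Set G)) {g : G} (hg : g ∉ H) :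
    ∃ U : Subgroup G, IsOpen (U : Set G) ∧ H ≤ U ∧ g ∉ U := by
  have hcl : IsClosed (g • (H : Set G)) := hH.smul g
  have h1 : (1 : G) ∉ g • (H : Set G) := by
    rintro ⟨h, hh, he⟩
    simp only [smul_eq_mul] at he
    exact hg (eq_inv_of_mul_eq_one_left he ▸ H.inv_mem hh)
  obtain ⟨W, hWclopen, h1W, hWsub⟩ :=
    compact_exists_isClopen_in_isOpen hcl.isOpen_compl h1
  obtain ⟨N, hN⟩ :=
    IsTopologicalGroup.exist_openNormalSubgroup_sub_clopen_nhds_of_one hWclopen h1W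
  refine ⟨N.toSubgroup ⊔ H, Subgroup.isOpen_mono le_sup_left N.isOpen, le_sup_right, ?_⟩
  intro hgU
  rw [← SetLike.mem_coe, Subgroup.normal_mul] at hgU
  obtain ⟨n, hn, h, hh, rfl⟩ := hgU
  exact hWsub (hN hn) ⟨h⁻¹, H.inv_mem hh, by simp [mul_assoc]⟩

/-- For a profinite group `G`, a profinite space `T` and a family of
closed subgroups `Gt t ≤ G` indexed by `T`, the family is continuous (for every open
subgroup `U` of `G` the set `{t | Gt t ≤ U}` is open) iff
`{(g,t) | g ∈ Gt t}` is closed in `G × T`. -/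
theorem continuous_family_iff_closed_graph
    (G T : Type*) [Group G] [TopologicalSpace G] [IsTopologicalGroup G]
    [CompactSpace G] [T2Space G] [TotallyDisconnectedSpace G]
    [TopologicalSpace T] [CompactSpace T] [T2Space T] [TotallyDisconnectedSpace T]
    (Gt : T → Subgroup G) (hclosed : ∀ t, IsClosed (Gt t : Set G)) :
    (∀ U : Subgroup G, IsOpen (U : Set G) → IsOpen {t : T | Gt t ≤ U}) ↔
      IsClosed {p : G × T | p.1 ∈ Gt p.2} := by
  constructor
  · intro h
    rw [← isOpen_compl_iff]
    rw [isOpen_iff_mem_nhds]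
    rintro ⟨g, t⟩ hgt
    simp only [Set.mem_compl_iff, Set.mem_setOf_eq] at hgt
    obtain ⟨U, hUopen, hle, hgU⟩ := exists_openSubgroup_of_not_mem (hclosed t) hgt
    have hmem : (↑U)ᶜ ×ˢ {t' : T | Gt t' ≤ U} ∈ nhds (g, t) :=
      (IsOpen.prod (U.isClosed_of_isOpen hUopen).isOpen_compl (h U hUopen)).mem_nhds ⟨hgU, hle⟩
    refine Filter.mem_of_superset hmem ?_
    rintro ⟨g', t'⟩ ⟨hg', ht'⟩ hmem'
    exact hg' (ht' hmem')
  · intro hE U hU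
    have : {t : T | Gt t ≤ U} = (Prod.snd '' ({p : G × T | p.1 ∈ Gt p.2} ∩ (↑U)ᶜ ×ˢ Set.univ))ᶜ := by
      ext t
      simp only [Set.mem_compl_iff, Set.mem_image, Set.mem_inter_iff, Set.mem_setOf_eq,
        Set.mem_prod, Set.mem_univ, and_true, Prod.exists]
      constructor
      · rintro hle ⟨g, t', ⟨hg, hgU⟩, rfl⟩
        exact hgU (hle hg)
      · intro hcon g hg
        by_contra hgU
        exact hcon ⟨g, t, ⟨hg, hgU⟩, rfl⟩
    rw [this]
    exact (((hE.inter (hU.isClosed_compl.prod isClosed_univ)).isCompact.image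
      continuous_snd).isClosed).isOpen_compl
end

section
/- Let G be a profinite group acting continuously on a profinite space T. Then the family of point stabilizers {G_t | t ∈ T} is continuous, i.e., for every open subgroup U of G, the set {t ∈ T | G_t ≤ U} is open in T. -/
/-- For a profinite group `G` acting continuously on a profinite space `T`,
the family of point stabilizers is continuous: for every open subgroup `U ≤ G` the set
`{t | G_t ⊆ U}` is open in `T`. -/
theorem stabilizer_family_continuous
    (G T : Type*) [Group G] [TopologicalSpace G] [IsTopologicalGroup G]
    [CompactSpace G] [T2Space G] [TotallyDisconnectedSpace G]
    [TopologicalSpace T] [CompactSpace T] [T2Space T] [TotallyDisconnectedSpace T]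
    (act : T → G → T)
    (hcont : Continuous fun p : T × G => act p.1 p.2)
    (hone : ∀ t, act t 1 = t)
    (hmul : ∀ t g h, act (act t g) h = act t (g * h)) :
    ∀ U : Subgroup G, IsOpen (U : Set G) →
      IsOpen {t : T | {g : G | act t g = t} ⊆ (U : Set G)} := by
  intro U hU
  set S : Set (T × G) := {p | act p.1 p.2 = p.1 ∧ p.2 ∉ (U : Set G)} with hS
  have hSclosed : IsClosed S := by
    apply IsClosed.inter
    · exact isClosed_eq hcont continuous_fst
    · exact (hU.preimage continuous_snd).isClosed_compl
  have himg : IsClosed (Prod.fst '' S) := by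
    have : IsClosedMap (Prod.fst : T × G → T) := isClosedMap_fst_of_compactSpace
    exact this S hSclosed
  have heq : {t : T | {g : G | act t g = t} ⊆ (U : Set G)} = (Prod.fst '' S)ᶜ := by
    ext t
    simp only [Set.mem_setOf_eq, Set.mem_compl_iff, Set.mem_image, not_exists]
    constructor
    · rintro h ⟨t', g⟩ ⟨⟨hg, hgU⟩, rfl⟩
      exact hgU (h hg)
    · intro h g hg
      by_contra hgU
      exact h (t, g) ⟨⟨hg, hgU⟩, rfl⟩
  rw [heq]
  exact himg.isOpen_compl
end
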